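/- arXiv:1312.3915 — 6 statements merged into one kernel-verified Lean document; each statement's English description precedes it below -/
import Mathlib

section
/- Monotonicity in the zero-order coefficient: if f ≥ 0 and 0 < a < A, then w_{Ω,a,f} ≥ w_{Ω,A,f} m-a.e. on X. -/
open MeasureTheory Filter
open scoped ENNReal

namespace AbsSob

variable {X : Type*} [MeasurableSpace X]

/-- Abstract Sobolev setting: a Riesz subspace `H` of `L²(X,m)` with the Stone
property (H1)-(H2), together with a gradient-like map `D` satisfying (D1)-(D4). -/
structure Setting (X : Type*) [MeasurableSpace X] (m : Measure X) where
  H : Set (X → ℝ)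
  D : (X → ℝ) → X → ℝ
  zero_mem : (fun _ => (0 : ℝ)) ∈ H
  add_mem : ∀ ⦃u v : X → ℝ⦄, u ∈ H → v ∈ H → u + v ∈ H
  smul_mem : ∀ (c : ℝ) ⦃u : X → ℝ⦄, u ∈ H → c • u ∈ H
  sup_mem : ∀ ⦃u v : X → ℝ⦄, u ∈ H → v ∈ H → u ⊔ v ∈ H
  inf_mem : ∀ ⦃u v : X → ℝ⦄, u ∈ H → v ∈ H → u ⊓ v ∈ H
  stone : ∀ ⦃u : X → ℝ⦄, u ∈ H → u ⊓ 1 ∈ H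
  memL2 : ∀ ⦃u : X → ℝ⦄, u ∈ H → MemLp u 2 m
  gradL2 : ∀ ⦃u : X → ℝ⦄, u ∈ H → MemLp (D u) 2 m
  D1 : ∀ ⦃u : X → ℝ⦄, u ∈ H → ∀ᵐ x ∂m, 0 ≤ D u x
  D2 : ∀ ⦃u v : X → ℝ⦄, u ∈ H → v ∈ H → ∀ᵐ x ∂m, D (u + v) x ≤ D u x + D v x
  D3 : ∀ (c : ℝ) ⦃u : X → ℝ⦄, u ∈ H → ∀ᵐ x ∂m, D (c • u) x = |c| * D u x
  D4 : ∀ ⦃u v : X → ℝ⦄, u ∈ H → v ∈ H → ∀ᵐ x ∂m,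
      D (u ⊔ v) x = if v x < u x then D u x else D v x

variable {m : Measure X}

/-- Square of the `H`-norm: `‖u‖_H² = ‖u‖²_{L²} + ‖Du‖²_{L²}`. -/
noncomputable def normHsq (S : Setting X m) (u : X → ℝ) : ℝ :=
  ∫ x, (u x) ^ 2 ∂m + ∫ x, (S.D u x) ^ 2 ∂m

/-- Sobolev functions vanishing (m-a.e.) outside `Ω`. -/
def H0 (S : Setting X m) (Ω : Set X) : Set (X → ℝ) :=
  {u | u ∈ S.H ∧ ∀ᵐ x ∂m, x ∉ Ω → u x = 0}

/-- The functional `F^{a,f}(u) = ½∫|Du|² + (a/2)∫u² − ∫ f u`. -/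
noncomputable def F (S : Setting X m) (a : ℝ) (f : X → ℝ) (u : X → ℝ) : ℝ :=
  (1 / 2) * ∫ x, (S.D u x) ^ 2 ∂m + (a / 2) * ∫ x, (u x) ^ 2 ∂m - ∫ x, f x * u x ∂m

/-- `w` is a minimizer of `F^{a,f}` over `H₀(Ω)`. -/
def IsMinimizer (S : Setting X m) (Ω : Set X) (a : ℝ) (f : X → ℝ) (w : X → ℝ) : Prop :=
  w ∈ H0 S Ω ∧ ∀ u ∈ H0 S Ω, F S a f w ≤ F S a f u

/-- (ℋ2): the inclusion `H ↪ L²` is compact. -/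
def CompactEmbedding (S : Setting X m) : Prop :=
  ∀ u : ℕ → X → ℝ, (∀ n, u n ∈ S.H) → (∃ C : ℝ, ∀ n, normHsq S (u n) ≤ C) →
    ∃ (φ : ℕ → ℕ) (v : X → ℝ), StrictMono φ ∧ v ∈ S.H ∧
      Tendsto (fun k => ∫ x, (u (φ k) x - v x) ^ 2 ∂m) atTop (nhds 0)

/-- (ℋ3): lower semicontinuity of the gradient energy along `L²`-convergent
`H`-bounded sequences, whose limit moreover belongs to `H`. -/
def GradLSC (S : Setting X m) : Prop :=
  ∀ (u : ℕ → X → ℝ) (v : X → ℝ), (∀ n, u n ∈ S.H) →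
    (∃ C : ℝ, ∀ n, normHsq S (u n) ≤ C) →
    Tendsto (fun n => ∫ x, (u n x - v x) ^ 2 ∂m) atTop (nhds 0) →
    v ∈ S.H ∧ ∫ x, (S.D v x) ^ 2 ∂m ≤ liminf (fun n => ∫ x, (S.D (u n) x) ^ 2 ∂m) atTop

/-- Energy sets: Borel sets coinciding up to an `m`-null set with `{w_Ω > 0}`. -/
def IsEnergySet (S : Setting X m) (Ω : Set X) : Prop :=
  MeasurableSet Ω ∧ ∃ w, IsMinimizer S Ω 1 (fun _ => 1) w ∧ m (Ω \ {x | 0 < w x}) = 0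


section Aux

variable {m : Measure X}

lemma integrable_mul2 {f u : X → ℝ} (hf : MemLp f 2 m) (hu : MemLp u 2 m) :
    Integrable (fun x => f x * u x) m := by
  have h : MemLp (f • u) 1 m :=
    hu.smul hf (hpqr := ENNReal.holderConjugate_iff.mpr ENNReal.inv_two_add_inv_two)
  exact memLp_one_iff_integrable.mp h

lemma D_zero_ae (S : Setting X m) : ∀ᵐ x ∂m, S.D (fun _ => 0) x = 0 := by
  have h0 : (0 : ℝ) • (fun _ : X => (0 : ℝ)) = fun _ => 0 := by funext x; simp
  have := S.D3 0 S.zero_mem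
  rw [h0] at this
  filter_upwards [this] with x hx
  simpa using hx

lemma D_neg_ae (S : Setting X m) {u : X → ℝ} (hu : u ∈ S.H) :
    ∀ᵐ x ∂m, S.D ((-1 : ℝ) • u) x = S.D u x := by
  filter_upwards [S.D3 (-1) hu] with x hx
  simpa using hx

lemma D_inf_ae (S : Setting X m) {u v : X → ℝ} (hu : u ∈ S.H) (hv : v ∈ S.H) :
    ∀ᵐ x ∂m, S.D (u ⊓ v) x = if u x < v x then S.D u x else S.D v x := by
  have hnu : (-1 : ℝ) • u ∈ S.H := S.smul_mem _ hu
  have hnv : (-1 : ℝ) • v ∈ S.H := S.smul_mem _ hv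
  have hg : ((-1 : ℝ) • u) ⊔ ((-1 : ℝ) • v) ∈ S.H := S.sup_mem hnu hnv
  have key : u ⊓ v = (-1 : ℝ) • (((-1 : ℝ) • u) ⊔ ((-1 : ℝ) • v)) := by
    funext x
    simp only [Pi.inf_apply, Pi.smul_apply, Pi.sup_apply, smul_eq_mul, neg_one_mul]
    rw [max_neg_neg, neg_neg]
  filter_upwards [D_neg_ae S hg, S.D4 hnu hnv, D_neg_ae S hu, D_neg_ae S hv]
    with x h1 h2 h3 h4
  rw [key, h1, h2]
  simp only [Pi.smul_apply, smul_eq_mul, neg_one_mul, neg_lt_neg_iff]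
  split_ifs with hc
  · exact h3
  · exact h4

end Aux

/-- monotonicity in the zero-order coefficient:
if `f ≥ 0` and `0 < a < A` then `w_{Ω,a,f} ≥ w_{Ω,A,f}` m-a.e. -/
theorem statement_7 {X : Type*} [MeasurableSpace X] {m : Measure X} [IsFiniteMeasure m]
    (S : Setting X m) {Ω : Set X} (hΩ : MeasurableSet Ω)
    {a A : ℝ} (ha : 0 < a) (haA : a < A)
    {f : X → ℝ} (hf : MemLp f 2 m) (hf0 : ∀ᵐ x ∂m, 0 ≤ f x)
    {w W : X → ℝ} (hw : IsMinimizer S Ω a f w) (hW : IsMinimizer S Ω A f W) :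
    ∀ᵐ x ∂m, W x ≤ w x := by
  obtain ⟨⟨hwH, hwΩ⟩, hwmin⟩ := hw
  obtain ⟨⟨hWH, hWΩ⟩, hWmin⟩ := hW
  -- integrability facts
  have intSq : ∀ {u : X → ℝ}, u ∈ S.H → Integrable (fun x => (u x) ^ 2) m :=
    fun hu => (S.memL2 hu).integrable_sq
  have intDSq : ∀ {u : X → ℝ}, u ∈ S.H → Integrable (fun x => (S.D u x) ^ 2) m :=
    fun hu => (S.gradL2 hu).integrable_sq
  have intF : ∀ {u : X → ℝ}, u ∈ S.H → Integrable (fun x => f x * u x) m :=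
    fun hu => integrable_mul2 hf (S.memL2 hu)
  -- Step 1 : w ≥ 0 a.e.
  have hw0 : ∀ᵐ x ∂m, 0 ≤ w x := by
    set wp : X → ℝ := w ⊔ (fun _ => 0) with hwp
    have hwpH : wp ∈ S.H := S.sup_mem hwH S.zero_mem
    have hwpΩ : ∀ᵐ x ∂m, x ∉ Ω → wp x = 0 := by
      filter_upwards [hwΩ] with x hx hxΩ
      simp [hwp, Pi.sup_apply, hx hxΩ]
    have hmin1 := hwmin wp ⟨hwpH, hwpΩ⟩
    have hG : ∫ x, (S.D wp x) ^ 2 ∂m ≤ ∫ x, (S.D w x) ^ 2 ∂m := by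
      refine integral_mono_ae (intDSq hwpH) (intDSq hwH) ?_
      filter_upwards [S.D4 hwH S.zero_mem, D_zero_ae S] with x h1 h2
      show (S.D wp x) ^ 2 ≤ (S.D w x) ^ 2
      rw [hwp, h1]
      split_ifs with hc
      · exact le_refl _
      · rw [h2]; simpa using sq_nonneg (S.D w x)
    have hP : ∫ x, (wp x) ^ 2 ∂m ≤ ∫ x, (w x) ^ 2 ∂m := by
      refine integral_mono_ae (intSq hwpH) (intSq hwH) ?_
      refine Eventually.of_forall fun x => ?_
      show (max (w x) 0) ^ 2 ≤ (w x) ^ 2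
      rcases le_total (w x) 0 with h | h
      · rw [max_eq_right h]; simpa using sq_nonneg (w x)
      · rw [max_eq_left h]
    have hL : ∫ x, f x * w x ∂m ≤ ∫ x, f x * wp x ∂m := by
      refine integral_mono_ae (intF hwH) (intF hwpH) ?_
      filter_upwards [hf0] with x hfx
      exact mul_le_mul_of_nonneg_left (le_max_left _ _) hfx
    have hPeq : ∫ x, (wp x) ^ 2 ∂m = ∫ x, (w x) ^ 2 ∂m := by
      simp only [F] at hmin1
      have : a / 2 * ∫ x, (w x) ^ 2 ∂m ≤ a / 2 * ∫ x, (wp x) ^ 2 ∂m := by linarith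
      have h' : ∫ x, (w x) ^ 2 ∂m ≤ ∫ x, (wp x) ^ 2 ∂m :=
        le_of_mul_le_mul_left (by linarith) (by linarith : (0:ℝ) < a / 2)
      linarith
    have hzero : ∫ x, ((w x) ^ 2 - (wp x) ^ 2) ∂m = 0 := by
      rw [integral_sub (intSq hwH) (intSq hwpH)]
      linarith
    have hnn : 0 ≤ᵐ[m] fun x => (w x) ^ 2 - (wp x) ^ 2 := by
      refine Eventually.of_forall fun x => ?_
      have : (max (w x) 0) ^ 2 ≤ (w x) ^ 2 := by
        rcases le_total (w x) 0 with h | h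
        · rw [max_eq_right h]; simpa using sq_nonneg (w x)
        · rw [max_eq_left h]
      simpa [hwp, Pi.sup_apply] using sub_nonneg.mpr this
    have hae := (integral_eq_zero_iff_of_nonneg_ae hnn
      ((intSq hwH).sub (intSq hwpH))).mp hzero
    filter_upwards [hae] with x hx
    by_contra hneg
    push_neg at hneg
    have hwpx : wp x = 0 := by
      simp [hwp, Pi.sup_apply, max_eq_right (le_of_lt hneg)]
    have hx' : (w x) ^ 2 = 0 := by
      have h := hx
      simp only [Pi.zero_apply, hwpx] at h
      nlinarith [h]
    exact pow_ne_zero 2 (ne_of_lt hneg) hx'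
  -- Step 2 : competitors u = w ⊔ W and v = w ⊓ W
  have huH : w ⊔ W ∈ S.H := S.sup_mem hwH hWH
  have hvH : w ⊓ W ∈ S.H := S.inf_mem hwH hWH
  have huΩ : ∀ᵐ x ∂m, x ∉ Ω → (w ⊔ W) x = 0 := by
    filter_upwards [hwΩ, hWΩ] with x h1 h2 hxΩ
    simp [Pi.sup_apply, h1 hxΩ, h2 hxΩ]
  have hvΩ : ∀ᵐ x ∂m, x ∉ Ω → (w ⊓ W) x = 0 := by
    filter_upwards [hwΩ, hWΩ] with x h1 h2 hxΩ
    simp [Pi.inf_apply, h1 hxΩ, h2 hxΩ]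
  have hminu := hwmin (w ⊔ W) ⟨huH, huΩ⟩
  have hminv := hWmin (w ⊓ W) ⟨hvH, hvΩ⟩
  -- gradient identity
  have hDid : ∀ᵐ x ∂m, (S.D (w ⊔ W) x) ^ 2 + (S.D (w ⊓ W) x) ^ 2
      = (S.D w x) ^ 2 + (S.D W x) ^ 2 := by
    have hcomm : w ⊔ W = W ⊔ w := sup_comm w W
    filter_upwards [S.D4 hwH hWH, S.D4 hWH hwH, D_inf_ae S hwH hWH] with x h1 h2 h3
    rcases lt_trichotomy (w x) (W x) with hlt | heq | hgt
    · rw [h1, h3, if_neg (not_lt.mpr hlt.le), if_pos hlt]; ring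
    · have hA : S.D (w ⊔ W) x = S.D W x := by
        rw [h1, if_neg (by rw [heq]; exact lt_irrefl _)]
      have hB : S.D (w ⊔ W) x = S.D w x := by
        rw [hcomm] at hA ⊢
        rw [h2, if_neg (by rw [heq]; exact lt_irrefl _)]
      have hDeq : S.D w x = S.D W x := by rw [← hA, hB]
      rw [hA, h3, if_neg (by rw [heq]; exact lt_irrefl _), hDeq]
    · rw [h1, if_pos hgt, h3, if_neg (not_lt.mpr hgt.le)]
  have hGsum : (∫ x, (S.D (w ⊔ W) x) ^ 2 ∂m) + ∫ x, (S.D (w ⊓ W) x) ^ 2 ∂m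
      = (∫ x, (S.D w x) ^ 2 ∂m) + ∫ x, (S.D W x) ^ 2 ∂m := by
    rw [← integral_add (intDSq huH) (intDSq hvH),
        ← integral_add (intDSq hwH) (intDSq hWH)]
    exact integral_congr_ae hDid
  have hPsum : (∫ x, ((w ⊔ W) x) ^ 2 ∂m) + ∫ x, ((w ⊓ W) x) ^ 2 ∂m
      = (∫ x, (w x) ^ 2 ∂m) + ∫ x, (W x) ^ 2 ∂m := by
    rw [← integral_add (intSq huH) (intSq hvH),
        ← integral_add (intSq hwH) (intSq hWH)]
    refine integral_congr_ae (Eventually.of_forall fun x => ?_)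
    show (max (w x) (W x)) ^ 2 + (min (w x) (W x)) ^ 2 = _
    rcases le_total (w x) (W x) with h | h
    · rw [max_eq_right h, min_eq_left h]; ring
    · rw [max_eq_left h, min_eq_right h]
  have hLsum : (∫ x, f x * (w ⊔ W) x ∂m) + ∫ x, f x * (w ⊓ W) x ∂m
      = (∫ x, f x * w x ∂m) + ∫ x, f x * W x ∂m := by
    rw [← integral_add (intF huH) (intF hvH),
        ← integral_add (intF hwH) (intF hWH)]
    refine integral_congr_ae (Eventually.of_forall fun x => ?_)
    show f x * max (w x) (W x) + f x * min (w x) (W x) = _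
    rcases le_total (w x) (W x) with h | h
    · rw [max_eq_right h, min_eq_left h]; ring
    · rw [max_eq_left h, min_eq_right h]
  simp only [F] at hminu hminv
  -- derive ∫ W² ≤ ∫ (w ⊓ W)²
  have hPu : ∫ x, ((w ⊔ W) x) ^ 2 ∂m
      = (∫ x, (w x) ^ 2 ∂m) + (∫ x, (W x) ^ 2 ∂m) - ∫ x, ((w ⊓ W) x) ^ 2 ∂m := by
    linarith
  have haPu : a * ∫ x, ((w ⊔ W) x) ^ 2 ∂m
      = a * ((∫ x, (w x) ^ 2 ∂m) + (∫ x, (W x) ^ 2 ∂m) - ∫ x, ((w ⊓ W) x) ^ 2 ∂m) := by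
    rw [hPu]
  have hkey : (A - a) * ∫ x, (W x) ^ 2 ∂m ≤ (A - a) * ∫ x, ((w ⊓ W) x) ^ 2 ∂m := by
    nlinarith [hminu, hminv, hGsum, hLsum, haPu]
  have hPWv : ∫ x, (W x) ^ 2 ∂m ≤ ∫ x, ((w ⊓ W) x) ^ 2 ∂m :=
    le_of_mul_le_mul_left hkey (by linarith)
  -- Step 3 : conclude
  have hvleW : ∀ᵐ x ∂m, ((w ⊓ W) x) ^ 2 ≤ (W x) ^ 2 := by
    filter_upwards [hw0] with x hx
    show (min (w x) (W x)) ^ 2 ≤ (W x) ^ 2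
    rcases le_total (w x) (W x) with h | h
    · rw [min_eq_left h]; exact pow_le_pow_left₀ hx h 2
    · rw [min_eq_right h]
  have hzero2 : ∫ x, ((W x) ^ 2 - ((w ⊓ W) x) ^ 2) ∂m = 0 := by
    rw [integral_sub (intSq hWH) (intSq hvH)]
    have hge : 0 ≤ ∫ x, ((W x) ^ 2 - ((w ⊓ W) x) ^ 2) ∂m := by
      refine integral_nonneg_of_ae ?_
      filter_upwards [hvleW] with x hx
      simp only [Pi.zero_apply]
      linarith
    rw [integral_sub (intSq hWH) (intSq hvH)] at hge
    linarith
  have hnn2 : 0 ≤ᵐ[m] fun x => (W x) ^ 2 - ((w ⊓ W) x) ^ 2 := by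
    filter_upwards [hvleW] with x hx
    simp only [Pi.zero_apply]
    linarith
  have hae2 := (integral_eq_zero_iff_of_nonneg_ae hnn2
    ((intSq hWH).sub (intSq hvH))).mp hzero2
  filter_upwards [hw0, hae2] with x h0 h1
  by_contra hlt
  push_neg at hlt
  have hmin : (w ⊓ W) x = w x := by
    simp [Pi.inf_apply, min_eq_left hlt.le]
  have h1' : (W x) ^ 2 - (w x) ^ 2 = 0 := by
    have := h1
    simp only [Pi.zero_apply, hmin] at this
    exact this
  have : (w x) ^ 2 < (W x) ^ 2 := pow_lt_pow_left₀ hlt h0 two_ne_zero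
  linarith

end AbsSob
end

section
/- Monotonicity in the right-hand side: if f, g ∈ L²(X,m) with 0 ≤ f ≤ g, then w_{Ω,a,f} ≤ w_{Ω,a,g} m-a.e. on X. -/
open MeasureTheory Filter
open scoped ENNReal

namespace AbsSob

variable {X : Type*} [MeasurableSpace X]

variable {m : Measure X}

lemma aux_int_mul {u v : X → ℝ} (hu : MemLp u 2 m) (hv : MemLp v 2 m) :
    Integrable (fun x => u x * v x) m := by
  refine Integrable.mono' (hu.integrable_sq.add hv.integrable_sq)
    (hu.aestronglyMeasurable.mul hv.aestronglyMeasurable) ?_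
  filter_upwards with x
  simp only [Real.norm_eq_abs, abs_mul, Pi.add_apply]
  nlinarith [sq_abs (u x), sq_abs (v x), sq_nonneg (|u x| - |v x|), abs_nonneg (u x),
    abs_nonneg (v x)]

lemma aux_inf_eq {w W : X → ℝ} : w ⊓ W = (-1 : ℝ) • ((-1 : ℝ) • w ⊔ (-1 : ℝ) • W) := by
  simp [neg_smul, one_smul, ← neg_inf]

/-- D of the pointwise minimum. -/
lemma aux_D_inf (S : Setting X m) {w W : X → ℝ} (hw : w ∈ S.H) (hW : W ∈ S.H) :
    ∀ᵐ x ∂m, S.D (w ⊓ W) x = if w x < W x then S.D w x else S.D W x := by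
  have hmw := S.smul_mem (-1) hw
  have hmW := S.smul_mem (-1) hW
  have h1 := S.D3 (-1) (S.sup_mem hmw hmW)
  have h2 := S.D4 hmw hmW
  have h3 := S.D3 (-1) hw
  have h4 := S.D3 (-1) hW
  filter_upwards [h1, h2, h3, h4] with x e1 e2 e3 e4
  rw [show w ⊓ W = (-1 : ℝ) • ((-1 : ℝ) • w ⊔ (-1 : ℝ) • W) from aux_inf_eq, e1, e2]
  simp only [Pi.smul_apply, smul_eq_mul, neg_one_mul, neg_lt_neg_iff] at *
  rw [e3, e4]
  simp only [abs_neg, abs_one, one_mul]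

/-- monotonicity in the right-hand side:
if `0 ≤ f ≤ g` then `w_{Ω,a,f} ≤ w_{Ω,a,g}` m-a.e. -/
theorem statement_8 {X : Type*} [MeasurableSpace X] {m : Measure X} [IsFiniteMeasure m]
    (S : Setting X m) {Ω : Set X} (hΩ : MeasurableSet Ω) {a : ℝ} (ha : 0 < a)
    {f g : X → ℝ} (hf : MemLp f 2 m) (hg : MemLp g 2 m)
    (hf0 : ∀ᵐ x ∂m, 0 ≤ f x) (hfg : ∀ᵐ x ∂m, f x ≤ g x)
    {w W : X → ℝ} (hw : IsMinimizer S Ω a f w) (hW : IsMinimizer S Ω a g W) :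
    ∀ᵐ x ∂m, w x ≤ W x := by
  obtain ⟨⟨hwH, hwΩ⟩, hwmin⟩ := hw
  obtain ⟨⟨hWH, hWΩ⟩, hWmin⟩ := hW
  have hpH : w ⊓ W ∈ S.H := S.inf_mem hwH hWH
  have hqH : w ⊔ W ∈ S.H := S.sup_mem hwH hWH
  have hp0 : w ⊓ W ∈ H0 S Ω := by
    refine ⟨hpH, ?_⟩
    filter_upwards [hwΩ, hWΩ] with x h1 h2 hx
    simp [Pi.inf_apply, h1 hx, h2 hx]
  have hq0 : w ⊔ W ∈ H0 S Ω := by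
    refine ⟨hqH, ?_⟩
    filter_upwards [hwΩ, hWΩ] with x h1 h2 hx
    simp [Pi.sup_apply, h1 hx, h2 hx]
  have hwL2 := S.memL2 hwH
  have hWL2 := S.memL2 hWH
  have hpL2 := S.memL2 hpH
  have hqL2 := S.memL2 hqH
  have iw2 := hwL2.integrable_sq
  have iW2 := hWL2.integrable_sq
  have ip2 := hpL2.integrable_sq
  have iq2 := hqL2.integrable_sq
  have iDw2 := (S.gradL2 hwH).integrable_sq
  have iDW2 := (S.gradL2 hWH).integrable_sq
  have iDp2 := (S.gradL2 hpH).integrable_sq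
  have iDq2 := (S.gradL2 hqH).integrable_sq
  have ifw := aux_int_mul hf hwL2
  have ifp := aux_int_mul hf hpL2
  have igW := aux_int_mul hg hWL2
  have igq := aux_int_mul hg hqL2
  -- key pointwise gradient identity
  have hDkey : ∀ᵐ x ∂m,
      S.D (w ⊓ W) x ^ 2 + S.D (w ⊔ W) x ^ 2 = S.D w x ^ 2 + S.D W x ^ 2 := by
    have h1 := aux_D_inf S hwH hWH
    have h2 := S.D4 hwH hWH
    have h3 := S.D4 hWH hwH
    rw [sup_comm W w] at h3
    filter_upwards [h1, h2, h3] with x e1 e2 e3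
    rcases lt_trichotomy (w x) (W x) with h | h | h
    · rw [e1, e2, if_pos h, if_neg (lt_asymm h)]
    · have k1 : S.D (w ⊔ W) x = S.D W x := by rw [e2, if_neg (by simp [h])]
      have k2 : S.D (w ⊔ W) x = S.D w x := by rw [e3, if_neg (by simp [h])]
      have k3 : S.D w x = S.D W x := by rw [← k2, k1]
      rw [e1, if_neg (by simp [h]), k1, k3]
    · rw [e1, e2, if_neg (by exact fun hc => lt_asymm h hc), if_pos h]; ring
  have hDint : (∫ x, S.D (w ⊓ W) x ^ 2 ∂m) + (∫ x, S.D (w ⊔ W) x ^ 2 ∂m)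
      = (∫ x, S.D w x ^ 2 ∂m) + (∫ x, S.D W x ^ 2 ∂m) := by
    rw [← integral_add iDp2 iDq2, ← integral_add iDw2 iDW2]
    exact integral_congr_ae hDkey
  have hSq : (∫ x, (w ⊓ W) x ^ 2 ∂m) + (∫ x, (w ⊔ W) x ^ 2 ∂m)
      = (∫ x, w x ^ 2 ∂m) + (∫ x, W x ^ 2 ∂m) := by
    rw [← integral_add ip2 iq2, ← integral_add iw2 iW2]
    refine integral_congr_ae (Eventually.of_forall fun x => ?_)
    rcases le_total (w x) (W x) with h | h
    · simp only [Pi.inf_apply, Pi.sup_apply, inf_of_le_left h, sup_of_le_right h]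
    · simp only [Pi.inf_apply, Pi.sup_apply, inf_of_le_right h, sup_of_le_left h]; ring
  have hA := hwmin _ hp0
  have hB := hWmin _ hq0
  -- comparison of the linear parts
  have hdiff : (∫ x, f x * w x ∂m) - (∫ x, f x * (w ⊓ W) x ∂m)
      ≤ (∫ x, g x * (w ⊔ W) x ∂m) - (∫ x, g x * W x ∂m) := by
    rw [← integral_sub ifw ifp, ← integral_sub igq igW]
    refine integral_mono_ae (ifw.sub ifp) (igq.sub igW) ?_
    filter_upwards [hfg, hf0] with x h1 h0
    have hkey : w x - (w ⊓ W) x = (w ⊔ W) x - W x := by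
      rcases le_total (w x) (W x) with h | h
      · simp [Pi.inf_apply, Pi.sup_apply, inf_of_le_left h, sup_of_le_right h]
      · simp [Pi.inf_apply, Pi.sup_apply, inf_of_le_right h, sup_of_le_left h]
    have hnn : 0 ≤ w x - (w ⊓ W) x := by
      simp only [Pi.inf_apply, sub_nonneg]; exact inf_le_left
    have : f x * w x - f x * (w ⊓ W) x ≤ g x * w x - g x * (w ⊓ W) x := by
      have := mul_le_mul_of_nonneg_right h1 hnn
      nlinarith [this]
    calc f x * w x - f x * (w ⊓ W) x ≤ g x * w x - g x * (w ⊓ W) x := this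
      _ = g x * (w x - (w ⊓ W) x) := by ring
      _ = g x * ((w ⊔ W) x - W x) := by rw [hkey]
      _ = g x * (w ⊔ W) x - g x * W x := by ring
  have hSa : a / 2 * ((∫ x, (w ⊓ W) x ^ 2 ∂m) + (∫ x, (w ⊔ W) x ^ 2 ∂m))
      = a / 2 * ((∫ x, w x ^ 2 ∂m) + (∫ x, W x ^ 2 ∂m)) := by rw [hSq]
  have hFp : F S a f (w ⊓ W) ≤ F S a f w := by
    unfold F at hA hB ⊢
    linarith [hA, hB, hDint, hSa, hdiff]
  -- midpoint argument
  have hzH : (1 / 2 : ℝ) • (w + w ⊓ W) ∈ S.H := S.smul_mem _ (S.add_mem hwH hpH)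
  have hz0 : (1 / 2 : ℝ) • (w + w ⊓ W) ∈ H0 S Ω := by
    refine ⟨hzH, ?_⟩
    filter_upwards [hwΩ, hWΩ] with x h1 h2 hx
    simp [Pi.smul_apply, Pi.add_apply, Pi.inf_apply, h1 hx, h2 hx]
  have hC := hwmin _ hz0
  have iDz2 := (S.gradL2 hzH).integrable_sq
  have iz2 := (S.memL2 hzH).integrable_sq
  have ifz := aux_int_mul hf (S.memL2 hzH)
  have ir : Integrable (fun x => (w x - (w ⊓ W) x) ^ 2) m := by
    simpa [Pi.sub_apply] using (hwL2.sub hpL2).integrable_sq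
  have hDz : (∫ x, S.D ((1 / 2 : ℝ) • (w + w ⊓ W)) x ^ 2 ∂m)
      ≤ (1 / 2) * (∫ x, S.D w x ^ 2 ∂m) + (1 / 2) * (∫ x, S.D (w ⊓ W) x ^ 2 ∂m) := by
    have hb : ∀ᵐ x ∂m, S.D ((1 / 2 : ℝ) • (w + w ⊓ W)) x ^ 2
        ≤ (1 / 2) * S.D w x ^ 2 + (1 / 2) * S.D (w ⊓ W) x ^ 2 := by
      filter_upwards [S.D3 (1 / 2) (S.add_mem hwH hpH), S.D2 hwH hpH,
        S.D1 (S.add_mem hwH hpH), S.D1 hwH, S.D1 hpH] with x e1 e2 e3 e4 e5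
      have he : S.D ((1 / 2 : ℝ) • (w + w ⊓ W)) x = (1 / 2) * S.D (w + w ⊓ W) x := by
        rw [e1]; norm_num
      rw [he]
      nlinarith [sq_nonneg (S.D w x - S.D (w ⊓ W) x),
        mul_nonneg (by linarith : (0 : ℝ) ≤ S.D w x + S.D (w ⊓ W) x - S.D (w + w ⊓ W) x) e3,
        mul_nonneg (by linarith : (0 : ℝ) ≤ S.D w x + S.D (w ⊓ W) x - S.D (w + w ⊓ W) x)
          (by linarith : (0 : ℝ) ≤ S.D w x + S.D (w ⊓ W) x)]
    calc (∫ x, S.D ((1 / 2 : ℝ) • (w + w ⊓ W)) x ^ 2 ∂m)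
        ≤ ∫ x, ((1 / 2) * S.D w x ^ 2 + (1 / 2) * S.D (w ⊓ W) x ^ 2) ∂m :=
          integral_mono_ae iDz2 ((iDw2.const_mul _).add (iDp2.const_mul _)) hb
      _ = (1 / 2) * (∫ x, S.D w x ^ 2 ∂m) + (1 / 2) * (∫ x, S.D (w ⊓ W) x ^ 2 ∂m) := by
          have i3 : Integrable (fun x => (1 / 2 : ℝ) * S.D w x ^ 2) m := iDw2.const_mul _
          have i4 : Integrable (fun x => (1 / 2 : ℝ) * S.D (w ⊓ W) x ^ 2) m := iDp2.const_mul _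
          rw [integral_add i3 i4, integral_const_mul, integral_const_mul]
  have hz_sq : (∫ x, ((1 / 2 : ℝ) • (w + w ⊓ W)) x ^ 2 ∂m)
      = (1 / 2) * (∫ x, w x ^ 2 ∂m) + (1 / 2) * (∫ x, (w ⊓ W) x ^ 2 ∂m)
        - (1 / 4) * (∫ x, (w x - (w ⊓ W) x) ^ 2 ∂m) := by
    have hpt : ∀ x, ((1 / 2 : ℝ) • (w + w ⊓ W)) x ^ 2
        = (1 / 2) * (w x ^ 2) + (1 / 2) * ((w ⊓ W) x ^ 2)
          - (1 / 4) * ((w x - (w ⊓ W) x) ^ 2) := by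
      intro x; simp only [Pi.smul_apply, Pi.add_apply, smul_eq_mul]; ring
    have i1 : Integrable (fun x => (1 / 2 : ℝ) * w x ^ 2 + (1 / 2 : ℝ) * (w ⊓ W) x ^ 2) m :=
      (iw2.const_mul _).add (ip2.const_mul _)
    have i2 : Integrable (fun x => (1 / 4 : ℝ) * (w x - (w ⊓ W) x) ^ 2) m := ir.const_mul _
    have i3 : Integrable (fun x => (1 / 2 : ℝ) * w x ^ 2) m := iw2.const_mul _
    have i4 : Integrable (fun x => (1 / 2 : ℝ) * (w ⊓ W) x ^ 2) m := ip2.const_mul _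
    rw [integral_congr_ae (Eventually.of_forall hpt), integral_sub i1 i2,
      integral_add i3 i4, integral_const_mul, integral_const_mul, integral_const_mul]
  have hfz : (∫ x, f x * ((1 / 2 : ℝ) • (w + w ⊓ W)) x ∂m)
      = (1 / 2) * (∫ x, f x * w x ∂m) + (1 / 2) * (∫ x, f x * (w ⊓ W) x ∂m) := by
    have hpt : ∀ x, f x * ((1 / 2 : ℝ) • (w + w ⊓ W)) x
        = (1 / 2) * (f x * w x) + (1 / 2) * (f x * (w ⊓ W) x) := by
      intro x; simp only [Pi.smul_apply, Pi.add_apply, smul_eq_mul]; ring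
    have i1 : Integrable (fun x => (1 / 2 : ℝ) * (f x * w x)) m := ifw.const_mul _
    have i2 : Integrable (fun x => (1 / 2 : ℝ) * (f x * (w ⊓ W) x)) m := ifp.const_mul _
    rw [integral_congr_ae (Eventually.of_forall hpt), integral_add i1 i2,
      integral_const_mul, integral_const_mul]
  have hrnn : 0 ≤ ∫ x, (w x - (w ⊓ W) x) ^ 2 ∂m :=
    integral_nonneg fun x => sq_nonneg _
  have hra : a * (∫ x, (w x - (w ⊓ W) x) ^ 2 ∂m) ≤ 0 := by
    have hz_sq' : a / 2 * (∫ x, ((1 / 2 : ℝ) • (w + w ⊓ W)) x ^ 2 ∂m)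
        = a / 2 * ((1 / 2) * (∫ x, w x ^ 2 ∂m) + (1 / 2) * (∫ x, (w ⊓ W) x ^ 2 ∂m)
          - (1 / 4) * (∫ x, (w x - (w ⊓ W) x) ^ 2 ∂m)) := by rw [hz_sq]
    unfold F at hC hFp
    linarith [hC, hFp, hDz, hz_sq', hfz]
  have hr0 : (∫ x, (w x - (w ⊓ W) x) ^ 2 ∂m) = 0 := by
    by_contra hcon
    have hpos : 0 < ∫ x, (w x - (w ⊓ W) x) ^ 2 ∂m := lt_of_le_of_ne hrnn (Ne.symm hcon)
    nlinarith [mul_pos ha hpos]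
  have hae : (fun x => (w x - (w ⊓ W) x) ^ 2) =ᵐ[m] 0 :=
    (integral_eq_zero_iff_of_nonneg (fun x => sq_nonneg _) ir).mp hr0
  filter_upwards [hae] with x hx
  have hx' : w x - (w ⊓ W) x = 0 := by
    have : (w x - (w ⊓ W) x) ^ 2 = 0 := hx
    exact pow_eq_zero_iff (n := 2) (by norm_num) |>.mp this
  have : w x = (w ⊓ W) x := by linarith
  rw [this]
  simp only [Pi.inf_apply]
  exact inf_le_right

end AbsSob
end

section
/- Strong maximum principle: let w_Ω be the minimizer of F_Ω(u) = ½∫|Du|²dm + ½∫u²dm − ∫u dm over H₀(Ω). Then for every u ∈ H₀(Ω), the set {u ≠ 0} is contained in {w_Ω > 0} up to m-null sets. -/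
open MeasureTheory Filter
open scoped ENNReal

namespace AbsSob

variable {X : Type*} [MeasurableSpace X]

variable {m : Measure X}

/-- strong maximum principle: for each `u ∈ H₀(Ω)`,
`{u ≠ 0} ⊆ {w_Ω > 0}` up to an m-null set. -/
theorem statement_10 {X : Type*} [MeasurableSpace X] {m : Measure X} [IsFiniteMeasure m]
    (S : Setting X m) (hcpt : CompactEmbedding S) (hlsc : GradLSC S)
    {Ω : Set X} (hΩ : MeasurableSet Ω)
    {w : X → ℝ} (hw : IsMinimizer S Ω 1 (fun _ => 1) w)
    {u : X → ℝ} (hu : u ∈ H0 S Ω) :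
    ∀ᵐ x ∂m, u x ≠ 0 → 0 < w x := by
  obtain ⟨⟨hwH, hwΩ⟩, hwmin⟩ := hw
  obtain ⟨huH, huΩ⟩ := hu
  -- the truncated function φ = min(|u|, 1)
  set φ : X → ℝ := (u ⊔ (-1 : ℝ) • u) ⊓ 1 with hφdef
  have hφH : φ ∈ S.H := S.stone (S.sup_mem huH (S.smul_mem (-1) huH))
  have hφx : ∀ x, φ x = min (max (u x) (-(u x))) 1 := by
    intro x
    simp [hφdef, Pi.inf_apply, Pi.sup_apply, Pi.one_apply, Pi.smul_apply, smul_eq_mul,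
      neg_one_mul]
  have hφ0 : ∀ x, 0 ≤ φ x := by
    intro x
    rw [hφx]
    rcases le_total 0 (u x) with h | h
    · exact le_min (le_max_of_le_left h) zero_le_one
    · exact le_min (le_max_of_le_right (by linarith)) zero_le_one
  have hφΩ : ∀ᵐ x ∂m, x ∉ Ω → φ x = 0 := by
    filter_upwards [huΩ] with x h hx
    rw [hφx, h hx]
    simp
  -- measurable representative of w
  have hwm : AEMeasurable w m := (S.memL2 hwH).aestronglyMeasurable.aemeasurable
  set w' : X → ℝ := hwm.mk w with hw'def
  have hw'meas : Measurable w' := hwm.measurable_mk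
  have hw'eq : w =ᵐ[m] w' := hwm.ae_eq_mk
  set N : Set X := {x | w' x ≤ 0} with hNdef
  have hN : MeasurableSet N := measurableSet_le hw'meas measurable_const
  -- integrability facts
  have hint : ∀ v ∈ S.H, Integrable v m := fun v hv => (S.memL2 hv).integrable one_le_two
  have hintsq : ∀ v ∈ S.H, Integrable (fun x => (v x) ^ 2) m := fun v hv =>
    (S.memL2 hv).integrable_sq
  have hintDsq : ∀ v ∈ S.H, Integrable (fun x => (S.D v x) ^ 2) m := fun v hv =>
    (S.gradL2 hv).integrable_sq
  have hintind : Integrable (N.indicator φ) m := (hint φ hφH).indicator hN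
  set C : ℝ := (1 / 2) * ∫ x, (S.D φ x) ^ 2 ∂m + (1 / 2) * ∫ x, (φ x) ^ 2 ∂m with hCdef
  set I : ℝ := ∫ x, N.indicator φ x ∂m with hIdef
  -- the key estimate from minimality
  have key : ∀ ε : ℝ, 0 < ε → ε * I ≤ ε ^ 2 * C := by
    intro ε hε
    set ψ : X → ℝ := ε • φ with hψdef
    have hψH : ψ ∈ S.H := S.smul_mem ε hφH
    set v : X → ℝ := w ⊔ ψ with hvdef
    have hvH : v ∈ S.H := S.sup_mem hwH hψH
    have hvx : ∀ x, v x = max (w x) (ε * φ x) := by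
      intro x
      simp [hvdef, hψdef, Pi.sup_apply, Pi.smul_apply, smul_eq_mul]
    have hvΩ : ∀ᵐ x ∂m, x ∉ Ω → v x = 0 := by
      filter_upwards [hwΩ, hφΩ] with x h1 h2 hx
      rw [hvx, h1 hx, h2 hx]
      simp
    have hFle : F S 1 (fun _ => 1) w ≤ F S 1 (fun _ => 1) v := hwmin v ⟨hvH, hvΩ⟩
    simp only [F, one_mul] at hFle
    -- gradient bound
    have hDbound : ∀ᵐ x ∂m, (S.D v x) ^ 2 ≤ (S.D w x) ^ 2 + ε ^ 2 * (S.D φ x) ^ 2 := by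
      filter_upwards [S.D4 hwH hψH, S.D3 ε hφH] with x h4 h3
      rw [← hvdef] at h4
      rw [h4]
      split_ifs with h
      · nlinarith [sq_nonneg (S.D φ x), sq_nonneg ε, mul_nonneg (sq_nonneg ε) (sq_nonneg (S.D φ x))]
      · rw [h3, abs_of_pos hε]
        nlinarith [sq_nonneg (S.D w x)]
    have hA : ∫ x, (S.D v x) ^ 2 ∂m ≤ ∫ x, (S.D w x) ^ 2 ∂m + ε ^ 2 * ∫ x, (S.D φ x) ^ 2 ∂m := by
      have h1 : ∫ x, (S.D v x) ^ 2 ∂m ≤ ∫ x, ((S.D w x) ^ 2 + ε ^ 2 * (S.D φ x) ^ 2) ∂m :=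
        integral_mono_ae (hintDsq v hvH)
          ((hintDsq w hwH).add ((hintDsq φ hφH).const_mul _)) hDbound
      rwa [integral_add (hintDsq w hwH) ((hintDsq φ hφH).const_mul _),
        integral_const_mul] at h1
    have hvsq : ∀ x, (v x) ^ 2 ≤ (w x) ^ 2 + ε ^ 2 * (φ x) ^ 2 := by
      intro x
      rw [hvx]
      rcases max_cases (w x) (ε * φ x) with ⟨h, _⟩ | ⟨h, _⟩ <;> rw [h] <;>
        nlinarith [sq_nonneg (w x), sq_nonneg (φ x), sq_nonneg ε,
          mul_nonneg (sq_nonneg ε) (sq_nonneg (φ x))]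
    have hB : ∫ x, (v x) ^ 2 ∂m ≤ ∫ x, (w x) ^ 2 ∂m + ε ^ 2 * ∫ x, (φ x) ^ 2 ∂m := by
      have h1 : ∫ x, (v x) ^ 2 ∂m ≤ ∫ x, ((w x) ^ 2 + ε ^ 2 * (φ x) ^ 2) ∂m :=
        integral_mono_ae (hintsq v hvH) ((hintsq w hwH).add ((hintsq φ hφH).const_mul _))
          (Eventually.of_forall hvsq)
      rwa [integral_add (hintsq w hwH) ((hintsq φ hφH).const_mul _),
        integral_const_mul] at h1
    -- lower bound on the linear term
    have hlow : ∀ᵐ x ∂m, ε * N.indicator φ x ≤ v x - w x := by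
      filter_upwards [hw'eq] with x hx
      by_cases hxN : x ∈ N
      · rw [Set.indicator_of_mem hxN]
        have hw0 : w x ≤ 0 := by rw [hx]; exact hxN
        have : ε * φ x ≤ v x := by rw [hvx]; exact le_max_right _ _
        linarith
      · rw [Set.indicator_of_notMem hxN]
        have : w x ≤ v x := by rw [hvx]; exact le_max_left _ _
        linarith
    have hlowint : ε * I ≤ ∫ x, v x ∂m - ∫ x, w x ∂m := by
      have h1 : ∫ x, ε * N.indicator φ x ∂m ≤ ∫ x, (v x - w x) ∂m :=
        integral_mono_ae (hintind.const_mul ε) ((hint v hvH).sub (hint w hwH)) hlow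
      rwa [integral_const_mul, integral_sub (hint v hvH) (hint w hwH)] at h1
    rw [hCdef]
    linarith
  -- conclude I = 0
  have hInn : 0 ≤ I := integral_nonneg fun x => Set.indicator_nonneg (fun y _ => hφ0 y) x
  have hIC : ∀ ε : ℝ, 0 < ε → I ≤ ε * C := by
    intro ε hε
    have h := key ε hε
    have h2 : ε * I ≤ ε * (ε * C) := by nlinarith
    exact le_of_mul_le_mul_left h2 hε
  have hI0 : I = 0 := by
    rcases eq_or_lt_of_le hInn with h | h
    · exact h.symm
    · exfalso
      have hC : 0 < C := by have := hIC 1 one_pos; linarith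
      have h2 := hIC (I / (2 * C)) (by positivity)
      have h3 : I / (2 * C) * C = I / 2 := by field_simp
      rw [h3] at h2
      linarith
  have hind0 : ∀ᵐ x ∂m, N.indicator φ x = 0 := by
    have h := (integral_eq_zero_iff_of_nonneg_ae
      (Eventually.of_forall fun x => Set.indicator_nonneg (fun y _ => hφ0 y) x) hintind).mp hI0
    filter_upwards [h] with x hx using hx
  filter_upwards [hind0, hw'eq] with x hx hxw hux
  by_contra hwx
  push_neg at hwx
  have hxN : x ∈ N := by rw [hNdef]; simpa [← hxw] using hwx
  have hφ0x : φ x = 0 := by rwa [Set.indicator_of_mem hxN] at hx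
  have hφpos : 0 < φ x := by
    rw [hφx]
    rcases lt_or_gt_of_ne hux with h | h
    · exact lt_min (lt_max_of_lt_right (by linarith)) one_pos
    · exact lt_min (lt_max_of_lt_left h) one_pos
  linarith

end AbsSob
end

section
/- For every Borel set Ω ⊂ X one has H₀(Ω) = H₀({w_Ω > 0}); consequently λ₁(Ω) = λ₁({w_Ω > 0}) and E(Ω) = E({w_Ω > 0}). -/
open MeasureTheory Filter
open scoped ENNReal

namespace AbsSob

variable {X : Type*} [MeasurableSpace X]

variable {m : Measure X}

/-- First eigenvalue `λ₁(Ω)` (normalized Rayleigh quotient form). -/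
noncomputable def lambda1 (S : Setting X m) (Ω : Set X) : ℝ :=
  sInf {r : ℝ | ∃ u ∈ H0 S Ω, (∫ x, (u x) ^ 2 ∂m) = 1 ∧ r = ∫ x, (S.D u x) ^ 2 ∂m}

/-- Dirichlet energy `E(Ω)`. -/
noncomputable def En (S : Setting X m) (Ω : Set X) : ℝ :=
  sInf {r : ℝ | ∃ u ∈ H0 S Ω, r = F S 1 (fun _ => 1) u}

/-- Key lemma: if `w` minimizes `F^{1,1}` over `H₀(Ω)` and `u ∈ H₀(Ω)` is pointwise
nonnegative, then `u = 0` a.e. on `{w ≤ 0}`. -/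
lemma key_zero {m : Measure X} [IsFiniteMeasure m] (S : Setting X m)
    {Ω : Set X} {w : X → ℝ} (hw : IsMinimizer S Ω 1 (fun _ => 1) w)
    {u : X → ℝ} (hu : u ∈ H0 S Ω) (hupos : ∀ x, 0 ≤ u x) :
    ∀ᵐ x ∂m, w x ≤ 0 → u x = 0 := by
  obtain ⟨⟨hwH, hwz⟩, hmin⟩ := hw
  obtain ⟨huH, huz⟩ := hu
  obtain ⟨w', hw'sm, hww'⟩ := (S.memL2 hwH).aestronglyMeasurable
  set A : Set X := {x | w' x ≤ 0} with hA
  have hAmeas : MeasurableSet A := measurableSet_le hw'sm.measurable measurable_const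
  set g : X → ℝ := A.indicator u with hg
  have hgint : Integrable g m := ((S.memL2 huH).integrable (by norm_num)).indicator hAmeas
  have hgnn : ∀ x, 0 ≤ g x := fun x => Set.indicator_nonneg (fun y _ => hupos y) x
  have Iu2 : Integrable (fun x => u x ^ 2) m := (S.memL2 huH).integrable_sq
  have Iw2 : Integrable (fun x => w x ^ 2) m := (S.memL2 hwH).integrable_sq
  have IDu2 : Integrable (fun x => S.D u x ^ 2) m := (S.gradL2 huH).integrable_sq
  have IDw2 : Integrable (fun x => S.D w x ^ 2) m := (S.gradL2 hwH).integrable_sq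
  have Iw : Integrable w m := (S.memL2 hwH).integrable (by norm_num)
  set C : ℝ := (1/2) * (∫ x, S.D u x ^ 2 ∂m) + (1/2) * (∫ x, u x ^ 2 ∂m) with hC
  have hCnn : 0 ≤ C := by
    apply add_nonneg <;> apply mul_nonneg (by norm_num) <;>
      exact integral_nonneg fun x => sq_nonneg _
  have main : ∀ ε : ℝ, 0 < ε → ∫ x, g x ∂m ≤ ε * C := by
    intro ε hε
    set v : X → ℝ := w ⊔ (ε • u) with hv
    have hvH : v ∈ S.H := S.sup_mem hwH (S.smul_mem ε huH)
    have hvΩ : v ∈ H0 S Ω := by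
      refine ⟨hvH, ?_⟩
      filter_upwards [hwz, huz] with x h1 h2 hx
      simp [hv, Pi.sup_apply, Pi.smul_apply, h1 hx, h2 hx]
    have Iv : Integrable v m := (S.memL2 hvH).integrable (by norm_num)
    have Iv2 : Integrable (fun x => v x ^ 2) m := (S.memL2 hvH).integrable_sq
    have IDv2 : Integrable (fun x => S.D v x ^ 2) m := (S.gradL2 hvH).integrable_sq
    have hvx : ∀ x, v x = max (w x) (ε * u x) := by
      intro x; simp [hv, Pi.sup_apply, Pi.smul_apply, smul_eq_mul]
    have hDv : ∫ x, S.D v x ^ 2 ∂m ≤ ∫ x, S.D w x ^ 2 ∂m + ε ^ 2 * ∫ x, S.D u x ^ 2 ∂m := by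
      have hpt : ∀ᵐ x ∂m, S.D v x ^ 2 ≤ S.D w x ^ 2 + ε ^ 2 * S.D u x ^ 2 := by
        filter_upwards [S.D4 hwH (S.smul_mem ε huH), S.D3 ε huH] with x h4 h3
        rw [show S.D v x = S.D (w ⊔ ε • u) x from rfl, h4]
        split_ifs with h
        · nlinarith [sq_nonneg (S.D u x), sq_nonneg ε, sq_nonneg (ε * S.D u x)]
        · rw [h3, abs_of_pos hε]
          nlinarith [sq_nonneg (S.D w x)]
      calc ∫ x, S.D v x ^ 2 ∂m
          ≤ ∫ x, (S.D w x ^ 2 + ε ^ 2 * S.D u x ^ 2) ∂m :=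
            integral_mono_ae IDv2 (IDw2.add (IDu2.const_mul _)) hpt
        _ = _ := by rw [integral_add IDw2 (IDu2.const_mul _), integral_const_mul _ _]
    have hv2 : ∫ x, v x ^ 2 ∂m ≤ ∫ x, w x ^ 2 ∂m + ε ^ 2 * ∫ x, u x ^ 2 ∂m := by
      have hpt : ∀ x, v x ^ 2 ≤ w x ^ 2 + ε ^ 2 * u x ^ 2 := by
        intro x
        rcases max_cases (w x) (ε * u x) with ⟨h, _⟩ | ⟨h, _⟩ <;>
          rw [hvx x, h] <;>
          nlinarith [sq_nonneg (u x), sq_nonneg (w x), sq_nonneg (ε * u x)]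
      calc ∫ x, v x ^ 2 ∂m
          ≤ ∫ x, (w x ^ 2 + ε ^ 2 * u x ^ 2) ∂m :=
            integral_mono_ae Iv2 (Iw2.add (Iu2.const_mul _)) (Eventually.of_forall hpt)
        _ = _ := by rw [integral_add Iw2 (Iu2.const_mul _), integral_const_mul _ _]
    have hFF := hmin v hvΩ
    have hFw : F S 1 (fun _ => 1) w
        = (1/2) * ∫ x, S.D w x ^ 2 ∂m + (1/2) * ∫ x, w x ^ 2 ∂m - ∫ x, w x ∂m := by
      simp [F]
    have hFv : F S 1 (fun _ => 1) v
        = (1/2) * ∫ x, S.D v x ^ 2 ∂m + (1/2) * ∫ x, v x ^ 2 ∂m - ∫ x, v x ∂m := by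
      simp [F]
    rw [hFw, hFv] at hFF
    have hIv_Iw : ∫ x, v x ∂m - ∫ x, w x ∂m ≤ ε ^ 2 * C := by
      have hCr : ε ^ 2 * C
          = (1/2) * (ε ^ 2 * ∫ x, S.D u x ^ 2 ∂m) + (1/2) * (ε ^ 2 * ∫ x, u x ^ 2 ∂m) := by
        rw [hC]; ring
      have a1 : ∫ x, v x ∂m - ∫ x, w x ∂m ≤
          1/2 * ∫ x, S.D v x ^ 2 ∂m - 1/2 * ∫ x, S.D w x ^ 2 ∂m
          + 1/2 * ∫ x, v x ^ 2 ∂m - 1/2 * ∫ x, w x ^ 2 ∂m := by linarith [hFF]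
      have a2 : (1:ℝ)/2 * ∫ x, S.D v x ^ 2 ∂m - 1/2 * ∫ x, S.D w x ^ 2 ∂m ≤ 1/2 * (ε ^ 2 * ∫ x, S.D u x ^ 2 ∂m) := by linarith [hDv]
      have a3 : (1:ℝ)/2 * ∫ x, v x ^ 2 ∂m - 1/2 * ∫ x, w x ^ 2 ∂m ≤ 1/2 * (ε ^ 2 * ∫ x, u x ^ 2 ∂m) := by linarith [hv2]
      clear_value C
      linarith [a1, a2, a3, hCr]
    have hgle : ∀ᵐ x ∂m, ε * g x ≤ v x - w x := by
      filter_upwards [hww'] with x hx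
      by_cases hxA : x ∈ A
      · have hw0 : w x ≤ 0 := by rw [hx]; exact hxA
        have : g x = u x := Set.indicator_of_mem hxA u
        rw [this, hvx x]
        have := le_max_right (w x) (ε * u x)
        linarith
      · have : g x = 0 := Set.indicator_of_notMem hxA u
        rw [this, hvx x]
        have := le_max_left (w x) (ε * u x)
        linarith
    have hεg : ε * ∫ x, g x ∂m ≤ ∫ x, v x ∂m - ∫ x, w x ∂m := by
      rw [← integral_const_mul _ _, ← integral_sub Iv Iw]
      exact integral_mono_ae (hgint.const_mul ε) (Iv.sub Iw) hgle
    have h2 : ε * ∫ x, g x ∂m ≤ ε * (ε * C) := by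
      have : ε * (ε * C) = ε ^ 2 * C := by ring
      rw [this]; exact le_trans hεg hIv_Iw
    exact le_of_mul_le_mul_left h2 hε
  have hInt0 : ∫ x, g x ∂m = 0 := by
    have h1 : 0 ≤ ∫ x, g x ∂m := integral_nonneg hgnn
    have h2 : ∫ x, g x ∂m ≤ 0 := by
      by_contra h
      push_neg at h
      set I := ∫ x, g x ∂m with hI
      have hδpos : 0 < I / (C + 1) := by positivity
      have hcancel : I / (C + 1) * (C + 1) = I := div_mul_cancel₀ _ (by linarith)
      have := main (I / (C + 1)) hδpos
      nlinarith
    linarith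
  have hg0 : g =ᵐ[m] 0 := (integral_eq_zero_iff_of_nonneg hgnn hgint).mp hInt0
  filter_upwards [hg0, hww'] with x hx1 hx2 hwle
  have hxA : x ∈ A := by rw [hA]; simp only [Set.mem_setOf_eq]; rw [← hx2]; exact hwle
  have : g x = u x := Set.indicator_of_mem hxA u
  rw [← this, hx1]; rfl

/-- `H₀(Ω) = H₀({w_Ω > 0})`, hence `λ₁` and `E` coincide on the two sets. -/
theorem statement_11 {X : Type*} [MeasurableSpace X] {m : Measure X} [IsFiniteMeasure m]
    (S : Setting X m) (hcpt : CompactEmbedding S) (hlsc : GradLSC S)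
    {Ω : Set X} (hΩ : MeasurableSet Ω)
    {w : X → ℝ} (hw : IsMinimizer S Ω 1 (fun _ => 1) w) :
    H0 S Ω = H0 S {x | 0 < w x} ∧
    lambda1 S Ω = lambda1 S {x | 0 < w x} ∧
    En S Ω = En S {x | 0 < w x} := by
  have hset : H0 S Ω = H0 S {x | 0 < w x} := by
    ext u
    constructor
    · rintro ⟨huH, huz⟩
      refine ⟨huH, ?_⟩
      -- positive and negative parts
      have hupH : u ⊔ (fun _ => (0:ℝ)) ∈ H0 S Ω := by
        refine ⟨S.sup_mem huH S.zero_mem, ?_⟩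
        filter_upwards [huz] with x hx hxΩ
        simp [Pi.sup_apply, hx hxΩ]
      have hunH : ((-1 : ℝ) • u) ⊔ (fun _ => (0:ℝ)) ∈ H0 S Ω := by
        refine ⟨S.sup_mem (S.smul_mem (-1) huH) S.zero_mem, ?_⟩
        filter_upwards [huz] with x hx hxΩ
        simp [Pi.sup_apply, Pi.smul_apply, hx hxΩ]
      have h1 := key_zero S hw hupH (fun x => by
        simp only [Pi.sup_apply]; exact le_sup_right)
      have h2 := key_zero S hw hunH (fun x => by
        simp only [Pi.sup_apply]; exact le_sup_right)
      filter_upwards [h1, h2] with x hx1 hx2 hxnot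
      have hwle : w x ≤ 0 := not_lt.mp (by simpa using hxnot)
      have e1 := hx1 hwle
      have e2 := hx2 hwle
      simp only [Pi.sup_apply, Pi.smul_apply, smul_eq_mul] at e1 e2
      have h1' : u x ≤ 0 := by
        by_contra hc; push_neg at hc
        rw [max_eq_left hc.le] at e1; linarith
      have h2' : -u x ≤ 0 := by
        by_contra hc; push_neg at hc
        rw [max_eq_left (by linarith : (0:ℝ) ≤ -1 * u x)] at e2; linarith
      linarith
    · rintro ⟨huH, huz⟩
      refine ⟨huH, ?_⟩
      filter_upwards [huz, hw.1.2] with x h1 h2 hxΩ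
      exact h1 (by simp [h2 hxΩ])
  refine ⟨hset, ?_, ?_⟩
  · unfold lambda1; rw [hset]
  · unfold En; rw [hset]

end AbsSob
end

section
/- For every u ∈ H with u ≥ 0, the set Ω = {u > 0} is an energy set, i.e. m(Ω ∖ {w_Ω > 0}) = 0. -/
open MeasureTheory Filter
open scoped ENNReal

namespace AbsSob

variable {X : Type*} [MeasurableSpace X]

variable {m : Measure X}

/-- for every nonnegative `u ∈ H`, the set `{u > 0}` is an energy set,
i.e. `m({u > 0} ∖ {w_{u>0} > 0}) = 0`. -/
theorem statement_12 {X : Type*} [MeasurableSpace X] {m : Measure X} [IsFiniteMeasure m]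
    (S : Setting X m) (hcpt : CompactEmbedding S) (hlsc : GradLSC S)
    {u : X → ℝ} (hu : u ∈ S.H) (hu0 : ∀ᵐ x ∂m, 0 ≤ u x)
    {w : X → ℝ} (hw : IsMinimizer S {x | 0 < u x} 1 (fun _ => 1) w) :
    m ({x | 0 < u x} \ {x | 0 < w x}) = 0 := by
  classical
  obtain ⟨⟨hwH, hwzero⟩, hmin⟩ := hw
  set u₁ : X → ℝ := u ⊓ 1 with hu₁def
  have hu₁H : u₁ ∈ S.H := S.stone hu
  have hu₁apply : ∀ x, u₁ x = min (u x) 1 := fun x => rfl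
  have hu₁le : ∀ x, u₁ x ≤ 1 := fun x => by rw [hu₁apply]; exact min_le_right _ _
  -- integrabilities
  have hwL2 := S.memL2 hwH
  have hu₁L2 := S.memL2 hu₁H
  have hwint : Integrable w m := hwL2.integrable one_le_two
  have hu₁int : Integrable u₁ m := hu₁L2.integrable one_le_two
  have hw2 : Integrable (fun x => (w x) ^ 2) m := hwL2.integrable_sq
  have hDw2 : Integrable (fun x => (S.D w x) ^ 2) m := (S.gradL2 hwH).integrable_sq
  have hDu₁2 : Integrable (fun x => (S.D u₁ x) ^ 2) m := (S.gradL2 hu₁H).integrable_sq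
  set C : ℝ := ∫ x, (S.D u₁ x) ^ 2 ∂m with hCdef
  have hC : 0 ≤ C := integral_nonneg fun x => sq_nonneg _
  -- the auxiliary function h
  set h : X → ℝ := fun x => if w x ≤ 0 then u₁ x else 0 with hhdef
  have hhm : AEStronglyMeasurable h m := by
    obtain ⟨wm, hwm, hweq⟩ := hwL2.aestronglyMeasurable
    obtain ⟨um, hum, hueq⟩ := hu₁L2.aestronglyMeasurable
    refine ⟨fun x => if wm x ≤ 0 then um x else 0, ?_, ?_⟩
    · exact ((hum.measurable.ite (measurableSet_le hwm.measurable measurable_const)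
        measurable_const)).stronglyMeasurable
    · filter_upwards [hweq, hueq] with x h1 h2
      simp only [hhdef, h1, h2]
  have hhint : Integrable h m := by
    refine hu₁int.mono hhm (Filter.Eventually.of_forall fun x => ?_)
    simp only [hhdef]
    split_ifs
    · exact le_rfl
    · simp
  have hhnn : 0 ≤ᵐ[m] h := by
    filter_upwards [hu0] with x hx
    simp only [hhdef, Pi.zero_apply]
    split_ifs
    · rw [hu₁apply]; exact le_min hx zero_le_one
    · exact le_rfl
  -- key estimate
  have key : ∀ ε : ℝ, 0 < ε → ε ≤ 1 / 2 → ∫ x, h x ∂m ≤ ε * C := by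
    intro ε hε hε2
    set z : X → ℝ := ε • u₁ with hzdef
    have hzH : z ∈ S.H := S.smul_mem ε hu₁H
    set v : X → ℝ := w ⊔ z with hvdef
    have hvH : v ∈ S.H := S.sup_mem hwH hzH
    have hvapply : ∀ x, v x = max (w x) (ε * u₁ x) := fun x => rfl
    have hvL2 := S.memL2 hvH
    have hvint : Integrable v m := hvL2.integrable one_le_two
    have hv2 : Integrable (fun x => (v x) ^ 2) m := hvL2.integrable_sq
    have hDv2 : Integrable (fun x => (S.D v x) ^ 2) m := (S.gradL2 hvH).integrable_sq
    -- v is a competitor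
    have hv0 : v ∈ H0 S {x | 0 < u x} := by
      refine ⟨hvH, ?_⟩
      filter_upwards [hwzero, hu0] with x hwx hux hxΩ
      have hu0x : u x = 0 := le_antisymm (not_lt.1 (by simpa using hxΩ)) hux
      have hu₁x : u₁ x = 0 := by rw [hu₁apply, hu0x]; simp
      have hwx0 : w x = 0 := hwx hxΩ
      rw [hvapply, hwx0, hu₁x]
      simp
    have hF := hmin v hv0
    simp only [F, one_mul] at hF
    -- gradient estimate
    have hgrad : ∫ x, (S.D v x) ^ 2 ∂m ≤ ∫ x, (S.D w x) ^ 2 ∂m + ε ^ 2 * C := by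
      have hae : ∀ᵐ x ∂m, (S.D v x) ^ 2 ≤ (S.D w x) ^ 2 + ε ^ 2 * (S.D u₁ x) ^ 2 := by
        filter_upwards [S.D4 hwH hzH, S.D3 ε hu₁H] with x h4 h3
        rw [show S.D v x = S.D (w ⊔ z) x from rfl, h4]
        split_ifs
        · nlinarith [mul_nonneg (sq_nonneg ε) (sq_nonneg (S.D u₁ x))]
        · rw [show S.D z x = S.D (ε • u₁) x from rfl, h3, abs_of_pos hε]
          nlinarith [sq_nonneg (S.D w x)]
      calc ∫ x, (S.D v x) ^ 2 ∂m
          ≤ ∫ x, ((S.D w x) ^ 2 + ε ^ 2 * (S.D u₁ x) ^ 2) ∂m :=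
            integral_mono_ae hDv2 (hDw2.add (hDu₁2.const_mul _)) hae
        _ = ∫ x, (S.D w x) ^ 2 ∂m + ε ^ 2 * C := by
            rw [integral_add hDw2 (hDu₁2.const_mul _), integral_const_mul]
    -- the functional inequality gives a bound on ∫ g
    have hgint : Integrable (fun x => (v x - w x) - ((v x) ^ 2 - (w x) ^ 2) / 2) m :=
      (hvint.sub hwint).sub ((hv2.sub hw2).div_const 2)
    have hfinal : ∫ x, ((v x - w x) - ((v x) ^ 2 - (w x) ^ 2) / 2) ∂m
        ≤ 1 / 2 * (ε ^ 2 * C) := by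
      have hint1 : Integrable (fun x => v x - w x) m := hvint.sub hwint
      have hint2 : Integrable (fun x => (v x ^ 2 - w x ^ 2) / 2) m := (hv2.sub hw2).div_const 2
      rw [integral_sub hint1 hint2, integral_sub hvint hwint, integral_div, integral_sub hv2 hw2]
      linarith [hgrad, hF]
    -- pointwise lower bound on g
    have hae2 : ∀ᵐ x ∂m, ε / 2 * h x ≤ (v x - w x) - ((v x) ^ 2 - (w x) ^ 2) / 2 := by
      filter_upwards [hu0] with x hux
      have h0 : 0 ≤ u₁ x := by rw [hu₁apply]; exact le_min hux zero_le_one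
      have h1 : u₁ x ≤ 1 := hu₁le x
      have hεu : ε * u₁ x ≤ 1 / 2 := by
        calc ε * u₁ x ≤ ε := mul_le_of_le_one_right hε.le h1
          _ ≤ 1 / 2 := hε2
      have hεu0 : 0 ≤ ε * u₁ x := mul_nonneg hε.le h0
      rw [hvapply]
      simp only [hhdef]
      rcases le_or_gt (ε * u₁ x) (w x) with hc | hc
      · rw [max_eq_left hc]
        split_ifs with hw0
        · have hz0 : u₁ x = 0 := le_antisymm (by nlinarith) h0
          simp [hz0]
        · simp
      · rw [max_eq_right hc.le]
        split_ifs with hw0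
        · nlinarith [mul_nonneg hεu0 (by linarith : (0:ℝ) ≤ 1 - ε * u₁ x),
            mul_nonneg (by linarith : (0:ℝ) ≤ -(w x)) (by linarith : (0:ℝ) ≤ 2 - w x)]
        · push_neg at hw0
          nlinarith [mul_nonneg (by linarith : (0:ℝ) ≤ ε * u₁ x - w x)
            (by linarith : (0:ℝ) ≤ 2 - ε * u₁ x - w x)]
    have hmono := integral_mono_ae (hhint.const_mul (ε / 2)) hgint hae2
    rw [integral_const_mul] at hmono
    have h2 : ε / 2 * (∫ x, h x ∂m) ≤ ε / 2 * (ε * C) := by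
      have : (1:ℝ) / 2 * (ε ^ 2 * C) = ε / 2 * (ε * C) := by ring
      linarith [hfinal, hmono]
    exact le_of_mul_le_mul_left h2 (by positivity)
  -- conclude ∫ h = 0
  have hI0 : ∫ x, h x ∂m ≤ 0 := by
    by_contra hcon
    push_neg at hcon
    set I : ℝ := ∫ x, h x ∂m with hIdef
    set ε : ℝ := min (1 / 2) (I / (2 * (C + 1))) with hεdef
    have hCpos : (0:ℝ) < C + 1 := by linarith
    have hεpos : 0 < ε := lt_min (by norm_num) (div_pos hcon (by linarith))
    have hkey := key ε hεpos (min_le_left _ _)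
    have h1 : ε * C ≤ ε * (C + 1) := by nlinarith
    have h2 : ε * (C + 1) ≤ I / (2 * (C + 1)) * (C + 1) :=
      mul_le_mul_of_nonneg_right (min_le_right _ _) hCpos.le
    have h3 : I / (2 * (C + 1)) * (C + 1) = I / 2 := by
      field_simp
    linarith
  have hh0 : ∀ᵐ x ∂m, h x = 0 := by
    have := (integral_eq_zero_iff_of_nonneg_ae hhnn hhint).1
      (le_antisymm hI0 (integral_nonneg_of_ae hhnn))
    filter_upwards [this] with x hx
    simpa using hx
  refine measure_mono_null ?_ (ae_iff.mp hh0)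
  intro x hx
  simp only [Set.mem_diff, Set.mem_setOf_eq] at hx ⊢
  obtain ⟨hux, hwx⟩ := hx
  have hw0 : w x ≤ 0 := not_lt.1 hwx
  have : h x = u₁ x := by simp only [hhdef]; rw [if_pos hw0]
  rw [this, hu₁apply]
  have : 0 < min (u x) 1 := lt_min hux one_pos
  exact ne_of_gt this


end AbsSob
end

section
/- Mosco-type closedness: if energy sets Ω_n weak-γ-converge to Ω (i.e. w_{Ω_n} → w in L²(X,m) and Ω = {w > 0}), and u_n ∈ H₀(Ω_n) is a sequence bounded in H converging strongly in L²(X,m) to u ∈ H, then u ∈ H₀(Ω). -/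
open MeasureTheory Filter
open scoped ENNReal

namespace AbsSob

variable {X : Type*} [MeasurableSpace X]

variable {m : Measure X}

section KeyLemma
variable {X : Type*} [MeasurableSpace X] {m : Measure X}

/-- Key per-`n` estimate: testing the minimality of the energy function `w0` of `A`
against `w0 ⊔ t • |u0|` yields `∫ (t|u0| - w0)⁺ ≤ (t²/2) ‖u0‖²_H`. -/
lemma key_estimate [IsFiniteMeasure m] (S : Setting X m) {A : Set X} {w0 u0 : X → ℝ}
    (hw : IsMinimizer S A 1 (fun _ => 1) w0) (hu : u0 ∈ H0 S A) {t : ℝ} (ht : 0 < t) :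
    ∫ x, max (t * |u0 x| - w0 x) 0 ∂m ≤ t ^ 2 / 2 * normHsq S u0 := by
  classical
  obtain ⟨⟨hwH, hw0⟩, hmin⟩ := hw
  obtain ⟨huH, hu0⟩ := hu
  set v : X → ℝ := u0 ⊔ (-1 : ℝ) • u0 with hv
  have hvx : ∀ x, v x = |u0 x| := by
    intro x
    rw [hv, Pi.sup_apply, Pi.smul_apply, smul_eq_mul, neg_one_mul,
      abs_eq_max_neg]
  have hvH : v ∈ S.H := S.sup_mem huH (S.smul_mem (-1) huH)
  have htvH : t • v ∈ S.H := S.smul_mem t hvH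
  have hzH : w0 ⊔ t • v ∈ S.H := S.sup_mem hwH htvH
  have htvx : ∀ x, (t • v) x = t * |u0 x| := by
    intro x; rw [Pi.smul_apply, smul_eq_mul, hvx x]
  have hDv : ∀ᵐ x ∂m, S.D v x = S.D u0 x := by
    filter_upwards [S.D3 (-1) huH, S.D4 huH (S.smul_mem (-1) huH)] with x h3 h4
    rw [hv, h4]
    split_ifs with h
    · rfl
    · rw [h3]; norm_num
  have hDtv : ∀ᵐ x ∂m, S.D (t • v) x = t * S.D u0 x := by
    filter_upwards [S.D3 t hvH, hDv] with x h1 h2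
    rw [h1, h2, abs_of_pos ht]
  -- membership of the competitor in H0
  have hz0 : ∀ᵐ x ∂m, x ∉ A → (w0 ⊔ t • v) x = 0 := by
    filter_upwards [hw0, hu0] with x h1 h2 hx
    rw [Pi.sup_apply, h1 hx, htvx x, h2 hx, abs_zero, mul_zero, sup_idem]
  have hFle := hmin (w0 ⊔ t • v) ⟨hzH, hz0⟩
  -- integrability
  have imax : Integrable (fun x => max (t * |u0 x| - w0 x) 0) m :=
    ((((S.memL2 huH).integrable one_le_two).abs.const_mul t).sub
      ((S.memL2 hwH).integrable one_le_two)).pos_part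
  have iDz2 : Integrable (fun x => (S.D (w0 ⊔ t • v) x) ^ 2) m := (S.gradL2 hzH).integrable_sq
  have iz2 : Integrable (fun x => ((w0 ⊔ t • v) x) ^ 2) m := (S.memL2 hzH).integrable_sq
  have iz1 : Integrable (w0 ⊔ t • v) m := (S.memL2 hzH).integrable one_le_two
  have iw1 : Integrable w0 m := (S.memL2 hwH).integrable one_le_two
  have iw2 : Integrable (fun x => (w0 x) ^ 2) m := (S.memL2 hwH).integrable_sq
  have iDw2 : Integrable (fun x => (S.D w0 x) ^ 2) m := (S.gradL2 hwH).integrable_sq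
  have iu2 : Integrable (fun x => (u0 x) ^ 2) m := (S.memL2 huH).integrable_sq
  have iDu2 : Integrable (fun x => (S.D u0 x) ^ 2) m := (S.gradL2 huH).integrable_sq
  -- pointwise a.e. inequality
  have hpt : ∀ᵐ x ∂m,
      max (t * |u0 x| - w0 x) 0 + (1/2) * (S.D (w0 ⊔ t • v) x) ^ 2
          + (1/2) * ((w0 ⊔ t • v) x) ^ 2 + w0 x
        ≤ t ^ 2 / 2 * (S.D u0 x) ^ 2 + t ^ 2 / 2 * (u0 x) ^ 2
          + (1/2) * (S.D w0 x) ^ 2 + (1/2) * (w0 x) ^ 2 + (w0 ⊔ t • v) x := by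
    filter_upwards [S.D4 hwH htvH, hDtv] with x h1 h2
    by_cases hlt : (t • v) x < w0 x
    · rw [if_pos hlt] at h1
      have hz1 : (w0 ⊔ t • v) x = w0 x := by
        rw [Pi.sup_apply]; exact sup_eq_left.mpr hlt.le
      have hmax0 : max (t * |u0 x| - w0 x) 0 = 0 := by
        apply max_eq_right
        rw [← htvx x]; linarith
      rw [h1, hz1, hmax0]
      have h01 : 0 ≤ t ^ 2 / 2 * (S.D u0 x) ^ 2 := by positivity
      have h02 : 0 ≤ t ^ 2 / 2 * (u0 x) ^ 2 := by positivity
      linarith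
    · rw [if_neg hlt] at h1
      push_neg at hlt
      have hz1 : (w0 ⊔ t • v) x = t * |u0 x| := by
        rw [Pi.sup_apply, sup_eq_right.mpr hlt, htvx x]
      have hmax0 : max (t * |u0 x| - w0 x) 0 = t * |u0 x| - w0 x := by
        apply max_eq_left
        rw [← htvx x]; linarith
      rw [h1, h2, hz1, hmax0]
      have e1 : (t * |u0 x|) ^ 2 = t ^ 2 * (u0 x) ^ 2 := by rw [mul_pow, sq_abs]
      have e2 : (t * S.D u0 x) ^ 2 = t ^ 2 * (S.D u0 x) ^ 2 := by rw [mul_pow]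
      nlinarith [sq_nonneg (S.D w0 x), sq_nonneg (w0 x)]
  have i1 : Integrable (fun x => max (t * |u0 x| - w0 x) 0
      + (1/2) * (S.D (w0 ⊔ t • v) x) ^ 2) m := imax.add (iDz2.const_mul (1/2))
  have i2 : Integrable (fun x => max (t * |u0 x| - w0 x) 0
      + (1/2) * (S.D (w0 ⊔ t • v) x) ^ 2 + (1/2) * ((w0 ⊔ t • v) x) ^ 2) m :=
    i1.add (iz2.const_mul (1/2))
  have j1 : Integrable (fun x => t ^ 2 / 2 * (S.D u0 x) ^ 2 + t ^ 2 / 2 * (u0 x) ^ 2) m :=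
    (iDu2.const_mul (t ^ 2 / 2)).add (iu2.const_mul (t ^ 2 / 2))
  have j2 : Integrable (fun x => t ^ 2 / 2 * (S.D u0 x) ^ 2 + t ^ 2 / 2 * (u0 x) ^ 2
      + (1/2) * (S.D w0 x) ^ 2) m := j1.add (iDw2.const_mul (1/2))
  have j3 : Integrable (fun x => t ^ 2 / 2 * (S.D u0 x) ^ 2 + t ^ 2 / 2 * (u0 x) ^ 2
      + (1/2) * (S.D w0 x) ^ 2 + (1/2) * (w0 x) ^ 2) m := j2.add (iw2.const_mul (1/2))
  have hmono : ∫ x, (max (t * |u0 x| - w0 x) 0 + (1/2) * (S.D (w0 ⊔ t • v) x) ^ 2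
          + (1/2) * ((w0 ⊔ t • v) x) ^ 2 + w0 x) ∂m
        ≤ ∫ x, (t ^ 2 / 2 * (S.D u0 x) ^ 2 + t ^ 2 / 2 * (u0 x) ^ 2
          + (1/2) * (S.D w0 x) ^ 2 + (1/2) * (w0 x) ^ 2 + (w0 ⊔ t • v) x) ∂m :=
    integral_mono_ae (i2.add iw1) (j3.add iz1) hpt
  rw [integral_add i2 iw1, integral_add i1 (iz2.const_mul (1/2)),
    integral_add imax (iDz2.const_mul (1/2)),
    integral_add j3 iz1, integral_add j2 (iw2.const_mul (1/2)),
    integral_add j1 (iDw2.const_mul (1/2)),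
    integral_add (iDu2.const_mul (t ^ 2 / 2)) (iu2.const_mul (t ^ 2 / 2))] at hmono
  simp only [integral_const_mul] at hmono
  simp only [F, one_mul] at hFle
  simp only [normHsq]
  linarith
end KeyLemma


/-- Mosco-type closedness: if `Ωₙ` weak-γ-converges to `Ω = {w > 0}`
and `uₙ ∈ H₀(Ωₙ)` is bounded in `H` and `L²`-converges to `u ∈ H`, then `u ∈ H₀(Ω)`. -/
theorem statement_13 {X : Type*} [MeasurableSpace X] {m : Measure X} [IsFiniteMeasure m]
    (S : Setting X m) (hcpt : CompactEmbedding S) (hlsc : GradLSC S)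
    (Ω : ℕ → Set X) (hΩ : ∀ n, MeasurableSet (Ω n))
    (wn : ℕ → X → ℝ) (hwn : ∀ n, IsMinimizer S (Ω n) 1 (fun _ => 1) (wn n))
    (hEn : ∀ n, m (Ω n \ {x | 0 < wn n x}) = 0)
    {w : X → ℝ} (hwH : w ∈ S.H)
    (hconv : Tendsto (fun n => ∫ x, (wn n x - w x) ^ 2 ∂m) atTop (nhds 0))
    (un : ℕ → X → ℝ) (hun : ∀ n, un n ∈ H0 S (Ω n))
    (hbd : ∃ C : ℝ, ∀ n, normHsq S (un n) ≤ C)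
    {u : X → ℝ} (huH : u ∈ S.H)
    (huconv : Tendsto (fun n => ∫ x, (un n x - u x) ^ 2 ∂m) atTop (nhds 0)) :
    u ∈ H0 S {x | 0 < w x} := by
  classical
  obtain ⟨C, hC⟩ := hbd
  have hC0 : (0:ℝ) ≤ C := by
    refine le_trans ?_ (hC 0)
    simp only [normHsq]
    exact add_nonneg (integral_nonneg fun x => sq_nonneg _)
      (integral_nonneg fun x => sq_nonneg _)
  have intu : Integrable u m := (S.memL2 huH).integrable one_le_two
  have intw : Integrable w m := (S.memL2 hwH).integrable one_le_two
  have intun : ∀ n, Integrable (un n) m := fun n => (S.memL2 (hun n).1).integrable one_le_two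
  have intwn : ∀ n, Integrable (wn n) m := fun n => (S.memL2 (hwn n).1.1).integrable one_le_two
  set M : ℝ := (m Set.univ).toReal with hM
  have hM0 : 0 ≤ M := ENNReal.toReal_nonneg
  -- L¹ control by L² norms
  have habs : ∀ (g : X → ℝ), MemLp g 2 m → ∀ ε : ℝ, 0 < ε →
      ∫ x, |g x| ∂m ≤ ε / 2 * M + 1 / (2 * ε) * ∫ x, (g x) ^ 2 ∂m := by
    intro g hg ε hε
    have hint : Integrable g m := hg.integrable one_le_two
    have h2 : Integrable (fun x => (g x) ^ 2) m := hg.integrable_sq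
    have hpt : ∀ x, |g x| ≤ ε / 2 + 1 / (2 * ε) * (g x) ^ 2 := by
      intro x
      have h1 : 2 * ε * |g x| ≤ ε ^ 2 + (g x) ^ 2 := by
        nlinarith [sq_nonneg (|g x| - ε), sq_abs (g x)]
      have h2ε : (0:ℝ) < 2 * ε := by linarith
      calc |g x| = 2 * ε * |g x| / (2 * ε) := by field_simp
        _ ≤ (ε ^ 2 + (g x) ^ 2) / (2 * ε) := by gcongr
        _ = ε / 2 + 1 / (2 * ε) * (g x) ^ 2 := by field_simp
    calc ∫ x, |g x| ∂m ≤ ∫ x, (ε / 2 + 1 / (2 * ε) * (g x) ^ 2) ∂m :=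
          integral_mono hint.abs ((integrable_const _).add (h2.const_mul _)) hpt
      _ = ε / 2 * M + 1 / (2 * ε) * ∫ x, (g x) ^ 2 ∂m := by
          rw [integral_add (integrable_const _) (h2.const_mul _), integral_const,
            integral_const_mul, measureReal_def, ← hM, smul_eq_mul]
          ring
  have intf : ∀ t : ℝ, Integrable (fun x => max (t * |u x| - w x) 0) m :=
    fun t => ((intu.abs.const_mul t).sub intw).pos_part
  -- limit of the key estimate
  have hkey : ∀ t : ℝ, 0 < t →
      ∫ x, max (t * |u x| - w x) 0 ∂m ≤ t ^ 2 / 2 * C := by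
    intro t ht
    have hstep : ∀ ε : ℝ, 0 < ε →
        ∫ x, max (t * |u x| - w x) 0 ∂m ≤ t ^ 2 / 2 * C + t * (ε / 2 * M) + ε / 2 * M := by
      intro ε hε
      have hchain : ∀ n, ∫ x, max (t * |u x| - w x) 0 ∂m ≤
          t ^ 2 / 2 * C + t * (ε / 2 * M + 1 / (2 * ε) * ∫ x, (un n x - u x) ^ 2 ∂m)
            + (ε / 2 * M + 1 / (2 * ε) * ∫ x, (wn n x - w x) ^ 2 ∂m) := by
        intro n
        have h1 : ∫ x, max (t * |un n x| - wn n x) 0 ∂m ≤ t ^ 2 / 2 * C :=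
          (key_estimate S (hwn n) (hun n) ht).trans
            (mul_le_mul_of_nonneg_left (hC n) (by positivity))
        have intfn : Integrable (fun x => max (t * |un n x| - wn n x) 0) m :=
          (((intun n).abs.const_mul t).sub (intwn n)).pos_part
        have intg1 : Integrable (fun x => t * |un n x - u x|) m :=
          ((intun n).sub intu).abs.const_mul t
        have intg2 : Integrable (fun x => |wn n x - w x|) m := ((intwn n).sub intw).abs
        have hptw : ∀ x, max (t * |u x| - w x) 0 ≤
            max (t * |un n x| - wn n x) 0 + (t * |un n x - u x| + |wn n x - w x|) := by
          intro x
          refine max_le ?_ (by positivity)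
          have e1 : t * |u x| - w x
              = (t * |un n x| - wn n x) + (t * (|u x| - |un n x|) + (wn n x - w x)) := by ring
          rw [e1]
          refine add_le_add (le_max_left _ _) (add_le_add ?_ (le_abs_self _))
          calc t * (|u x| - |un n x|) ≤ t * |u x - un n x| :=
                mul_le_mul_of_nonneg_left (abs_sub_abs_le_abs_sub _ _) ht.le
            _ = t * |un n x - u x| := by rw [abs_sub_comm]
        have iR2 : Integrable (fun x => t * |un n x - u x| + |wn n x - w x|) m :=
          intg1.add intg2
        have h2 : ∫ x, max (t * |u x| - w x) 0 ∂m ≤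
            ∫ x, (max (t * |un n x| - wn n x) 0
              + (t * |un n x - u x| + |wn n x - w x|)) ∂m :=
          integral_mono (intf t) (intfn.add iR2) hptw
        rw [integral_add intfn iR2, integral_add intg1 intg2,
          integral_const_mul] at h2
        have h3 := habs (fun x => un n x - u x) ((S.memL2 (hun n).1).sub (S.memL2 huH)) ε hε
        have h4 := habs (fun x => wn n x - w x) ((S.memL2 (hwn n).1.1).sub (S.memL2 hwH)) ε hε
        have h5 := mul_le_mul_of_nonneg_left h3 ht.le
        linarith
      have htend : Tendsto (fun n =>
          t ^ 2 / 2 * C + t * (ε / 2 * M + 1 / (2 * ε) * ∫ x, (un n x - u x) ^ 2 ∂m)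
            + (ε / 2 * M + 1 / (2 * ε) * ∫ x, (wn n x - w x) ^ 2 ∂m)) atTop
          (nhds (t ^ 2 / 2 * C + t * (ε / 2 * M + 1 / (2 * ε) * 0)
            + (ε / 2 * M + 1 / (2 * ε) * 0))) := by
        exact (tendsto_const_nhds.add
          ((tendsto_const_nhds.add (huconv.const_mul _)).const_mul t)).add
          (tendsto_const_nhds.add (hconv.const_mul _))
      have := ge_of_tendsto' htend hchain
      simp only [mul_zero, add_zero] at this
      exact this
    apply _root_.le_of_forall_pos_le_add
    intro δ hδ
    have hK : (0:ℝ) ≤ t * M / 2 + M / 2 := by positivity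
    have hε : (0:ℝ) < δ / (t * M / 2 + M / 2 + 1) := by positivity
    have h6 := hstep _ hε
    have h7 : t * (δ / (t * M / 2 + M / 2 + 1) / 2 * M)
        + δ / (t * M / 2 + M / 2 + 1) / 2 * M
        = δ / (t * M / 2 + M / 2 + 1) * (t * M / 2 + M / 2) := by ring
    have h8 : δ / (t * M / 2 + M / 2 + 1) * (t * M / 2 + M / 2) ≤ δ := by
      have h9 : δ / (t * M / 2 + M / 2 + 1) * (t * M / 2 + M / 2)
          ≤ δ / (t * M / 2 + M / 2 + 1) * (t * M / 2 + M / 2 + 1) :=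
        mul_le_mul_of_nonneg_left (by linarith) hε.le
      rw [div_mul_cancel₀ _ (by linarith : t * M / 2 + M / 2 + 1 ≠ 0)] at h9
      exact h9
    linarith
  -- measurable representatives
  have hwsm := (S.memL2 hwH).aestronglyMeasurable
  have husm := (S.memL2 huH).aestronglyMeasurable
  have hww' : w =ᵐ[m] hwsm.mk w := hwsm.ae_eq_mk
  have huu' : u =ᵐ[m] husm.mk u := husm.ae_eq_mk
  set w' : X → ℝ := hwsm.mk w with hw'
  set u' : X → ℝ := husm.mk u with hu'
  have intu' : Integrable u' m := intu.congr huu'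
  set A : Set X := {x | w' x ≤ 0} with hAdef
  have hAm : MeasurableSet A :=
    measurableSet_le hwsm.stronglyMeasurable_mk.measurable measurable_const
  -- the set integral bound
  have hsb : ∀ t : ℝ, 0 < t → t * ∫ x in A, |u' x| ∂m ≤ t ^ 2 / 2 * C := by
    intro t ht
    have h1 : ∫ x in A, t * |u' x| ∂m ≤ ∫ x in A, max (t * |u x| - w x) 0 ∂m := by
      refine integral_mono_ae ((intu'.abs.const_mul t).restrict) ((intf t).restrict) ?_
      refine (ae_restrict_iff' hAm).mpr ?_
      filter_upwards [hww', huu'] with x e1 e2 hxA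
      have hwx : w x ≤ 0 := by rw [e1]; exact hxA
      rw [← e2]
      exact le_trans (by linarith) (le_max_left (t * |u x| - w x) 0)
    have h2 : ∫ x in A, max (t * |u x| - w x) 0 ∂m ≤ ∫ x, max (t * |u x| - w x) 0 ∂m :=
      setIntegral_le_integral (intf t) (Eventually.of_forall fun x => le_max_right _ _)
    calc t * ∫ x in A, |u' x| ∂m = ∫ x in A, t * |u' x| ∂m := (integral_const_mul _ _).symm
      _ ≤ ∫ x, max (t * |u x| - w x) 0 ∂m := h1.trans h2
      _ ≤ t ^ 2 / 2 * C := hkey t ht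
  have hK0 : 0 ≤ ∫ x in A, |u' x| ∂m := integral_nonneg fun x => abs_nonneg _
  have hKle : ∫ x in A, |u' x| ∂m ≤ 0 := by
    apply _root_.le_of_forall_pos_le_add
    intro ε hε
    have hC1 : (0:ℝ) < C + 1 := by linarith
    have ht : (0:ℝ) < 2 * ε / (C + 1) := by positivity
    have h5 := hsb _ ht
    have h6 : ∫ x in A, |u' x| ∂m ≤ 2 * ε / (C + 1) * C / 2 := by
      have h7 : 2 * ε / (C + 1) * ∫ x in A, |u' x| ∂m
          ≤ 2 * ε / (C + 1) * (2 * ε / (C + 1) * C / 2) := by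
        calc 2 * ε / (C + 1) * ∫ x in A, |u' x| ∂m ≤ (2 * ε / (C + 1)) ^ 2 / 2 * C := h5
          _ = 2 * ε / (C + 1) * (2 * ε / (C + 1) * C / 2) := by ring
      exact le_of_mul_le_mul_left h7 ht
    have h8 : 2 * ε / (C + 1) * C / 2 ≤ ε := by
      calc 2 * ε / (C + 1) * C / 2 = ε * (C / (C + 1)) := by field_simp
        _ ≤ ε * 1 := mul_le_mul_of_nonneg_left ((div_le_one hC1).mpr (by linarith)) hε.le
        _ = ε := mul_one ε
    linarith
  have hKzero := (integral_eq_zero_iff_of_nonneg_ae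
    (Eventually.of_forall fun x => abs_nonneg (u' x)) (intu'.abs.restrict (s := A))).mp
    (le_antisymm hKle hK0)
  have hKzero' : ∀ᵐ x ∂m, x ∈ A → |u' x| = 0 := by
    have := (ae_restrict_iff' hAm).mp hKzero
    filter_upwards [this] with x hx hxA
    simpa using hx hxA
  refine ⟨huH, ?_⟩
  filter_upwards [hww', huu', hKzero'] with x e1 e2 h3 hx
  have hwx : w' x ≤ 0 := by rw [← e1]; exact not_lt.mp hx
  have h4 := h3 hwx
  rw [e2]
  exact abs_eq_zero.mp h4

end AbsSob
end
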